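/- arXiv:1411.1019 — 2 statements merged into one kernel-verified Lean document; each statement's English description precedes it below -/
import Mathlib

section
/- If f₀ ∈ L¹(ℝ²) ∩ L^∞(ℝ²), then the self-similar solution g̃ satisfies, for every s > 0, ‖g̃(s,·,·)‖_{L^∞(ℝ²)} ≤ min{ (√3/(2π)) (1 − e^{−s})^{−2} ‖f₀‖_{L¹}, e^{2s} ‖f₀‖_{L^∞} }. -/
open Real MeasureTheory

/-- The Kolmogorov kernel in Lagrangian variables. -/
noncomputable def G (t v z : ℝ) : ℝ :=
  (Real.sqrt 3 / (2 * Real.pi * t ^ 2)) *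
    Real.exp (-(1 / (4 * t ^ 3)) * (3 * z ^ 2 + (2 * t * v - 3 * z) ^ 2))

/-- The solution of the Lagrangian Kolmogorov equation: `g(t) = G_t * f₀`. -/
noncomputable def sol (f₀ : ℝ × ℝ → ℝ) (t v z : ℝ) : ℝ :=
  ∫ y : ℝ × ℝ, G t (v - y.1) (z - y.2) * f₀ y

/-- The self-similar solution. -/
noncomputable def tg (f₀ : ℝ × ℝ → ℝ) (s v z : ℝ) : ℝ :=
  Real.exp (2 * s) * sol f₀ (Real.exp s - 1) (Real.exp (s / 2) * v) (Real.exp (3 * s / 2) * z)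

lemma G_nonneg (t v z : ℝ) : 0 ≤ G t v z :=
  mul_nonneg (div_nonneg (Real.sqrt_nonneg 3) (by positivity)) (Real.exp_pos _).le

lemma G_le {t : ℝ} (ht : 0 < t) (v z : ℝ) :
    G t v z ≤ Real.sqrt 3 / (2 * Real.pi * t ^ 2) := by
  have h1 : Real.exp (-(1 / (4 * t ^ 3)) * (3 * z ^ 2 + (2 * t * v - 3 * z) ^ 2)) ≤ 1 := by
    rw [Real.exp_le_one_iff]
    have : 0 ≤ (1 / (4 * t ^ 3)) * (3 * z ^ 2 + (2 * t * v - 3 * z) ^ 2) := by positivity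
    linarith
  calc G t v z ≤ Real.sqrt 3 / (2 * Real.pi * t ^ 2) * 1 :=
        mul_le_mul_of_nonneg_left h1 (div_nonneg (Real.sqrt_nonneg 3) (by positivity))
    _ = _ := mul_one _

lemma G_eq {t : ℝ} (ht : 0 < t) (v z : ℝ) :
    G t v z = Real.sqrt 3 / (2 * Real.pi * t ^ 2) *
      (Real.exp (-(3 / (4 * t ^ 3)) * z ^ 2) *
        Real.exp (-(1 / t) * (v - 3 / (2 * t) * z) ^ 2)) := by
  unfold G
  rw [← Real.exp_add]
  congr 1
  have ht' : t ≠ 0 := ht.ne'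
  field_simp
  ring

lemma G_cont (t v z : ℝ) : Continuous fun y : ℝ × ℝ => G t (v - y.1) (z - y.2) := by
  unfold G; fun_prop

lemma G_cont' (t : ℝ) : Continuous fun p : ℝ × ℝ => G t p.1 p.2 := by
  unfold G; fun_prop

lemma int_x {t : ℝ} (ht : 0 < t) (y : ℝ) :
    Integrable (fun x => G t x y) volume := by
  have h1t : (0:ℝ) < 1 / t := by positivity
  have : (fun x => G t x y) = fun x =>
      (Real.sqrt 3 / (2 * Real.pi * t ^ 2) * Real.exp (-(3 / (4 * t ^ 3)) * y ^ 2)) *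
        Real.exp (-(1 / t) * (x - 3 / (2 * t) * y) ^ 2) := by
    funext x; rw [G_eq ht]; ring
  rw [this]
  exact (((integrable_exp_neg_mul_sq h1t).comp_sub_right (3 / (2 * t) * y)).const_mul _)

lemma int_x_val {t : ℝ} (ht : 0 < t) (y : ℝ) :
    ∫ x, ‖G t x y‖ = (Real.sqrt 3 / (2 * Real.pi * t ^ 2) * Real.sqrt (Real.pi * t)) *
      Real.exp (-(3 / (4 * t ^ 3)) * y ^ 2) := by
  have h1t : (0:ℝ) < 1 / t := by positivity
  have hn : ∀ x, ‖G t x y‖ = G t x y := fun x => by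
    rw [Real.norm_eq_abs, abs_of_nonneg (G_nonneg _ _ _)]
  simp_rw [hn]
  have : (fun x => G t x y) = fun x =>
      (Real.sqrt 3 / (2 * Real.pi * t ^ 2) * Real.exp (-(3 / (4 * t ^ 3)) * y ^ 2)) *
        Real.exp (-(1 / t) * (x - 3 / (2 * t) * y) ^ 2) := by
    funext x; rw [G_eq ht]; ring
  rw [this, MeasureTheory.integral_const_mul,
    integral_sub_right_eq_self (fun x => Real.exp (-(1 / t) * x ^ 2)) (3 / (2 * t) * y),
    integral_gaussian]
  rw [one_div]
  have : π / t⁻¹ = π * t := by field_simp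
  rw [this]; ring

lemma integrable_G {t : ℝ} (ht : 0 < t) :
    Integrable (fun p : ℝ × ℝ => G t p.1 p.2) volume := by
  rw [Measure.volume_eq_prod]
  rw [integrable_prod_iff' ((G_cont' t).aestronglyMeasurable)]
  constructor
  · exact Filter.Eventually.of_forall fun y => int_x ht y
  · have key : (fun y => ∫ x, ‖G t x y‖) =
        fun y => (Real.sqrt 3 / (2 * Real.pi * t ^ 2) * Real.sqrt (Real.pi * t)) *
          Real.exp (-(3 / (4 * t ^ 3)) * y ^ 2) := funext fun y => int_x_val ht y
    rw [key]
    exact (integrable_exp_neg_mul_sq (by positivity)).const_mul _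

lemma int_x_val2 {t : ℝ} (ht : 0 < t) (y : ℝ) :
    ∫ x, G t x y = (Real.sqrt 3 / (2 * Real.pi * t ^ 2) * Real.sqrt (Real.pi * t)) *
      Real.exp (-(3 / (4 * t ^ 3)) * y ^ 2) := by
  rw [← int_x_val ht y]
  congr 1; funext x; rw [Real.norm_eq_abs, abs_of_nonneg (G_nonneg _ _ _)]

lemma integral_G {t : ℝ} (ht : 0 < t) :
    ∫ p : ℝ × ℝ, G t p.1 p.2 = 1 := by
  have hint := integrable_G ht
  rw [Measure.volume_eq_prod] at hint
  rw [Measure.volume_eq_prod, MeasureTheory.integral_prod _ hint]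
  rw [integral_integral_swap hint]
  simp_rw [int_x_val2 ht]
  rw [MeasureTheory.integral_const_mul, integral_gaussian]
  have h3 : (0:ℝ) < Real.sqrt 3 := Real.sqrt_pos.mpr (by norm_num)
  have hπ : (0:ℝ) < Real.pi := Real.pi_pos
  have hA : Real.pi * t * (Real.pi / (3 / (4 * t ^ 3))) = (2 * Real.pi * t ^ 2) ^ 2 / 3 := by
    field_simp; ring
  rw [mul_assoc, ← Real.sqrt_mul (by positivity) , hA, Real.sqrt_div (by positivity),
    Real.sqrt_sq (by positivity)]
  rw [div_mul_div_comm]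
  rw [div_eq_one_iff_eq (by positivity)]
  ring

lemma sol_le_min (f₀ : ℝ × ℝ → ℝ) (hf₁ : MemLp f₀ 1 volume) (hfInf : MemLp f₀ ⊤ volume)
    {t : ℝ} (ht : 0 < t) (v z : ℝ) :
    |sol f₀ t v z| ≤ min
      (Real.sqrt 3 / (2 * Real.pi * t ^ 2) * (eLpNorm f₀ 1 volume).toReal)
      ((eLpNorm f₀ ⊤ volume).toReal) := by
  have hf : Integrable f₀ volume := memLp_one_iff_integrable.mp hf₁
  set K : ℝ × ℝ → ℝ := fun y => G t (v - y.1) (z - y.2) with hK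
  set C : ℝ := Real.sqrt 3 / (2 * Real.pi * t ^ 2) with hCdef
  have hKle : ∀ y, ‖K y‖ ≤ C := fun y => by
    rw [Real.norm_eq_abs, abs_of_nonneg (G_nonneg _ _ _)]
    exact G_le ht _ _
  have hKnn : ∀ y, 0 ≤ K y := fun y => G_nonneg _ _ _
  have hprod : Integrable (fun y => K y * f₀ y) volume :=
    hf.bdd_mul (G_cont t v z).aestronglyMeasurable (Filter.Eventually.of_forall hKle)
  have habs : |sol f₀ t v z| ≤ ∫ y, ‖K y * f₀ y‖ := by
    rw [← Real.norm_eq_abs]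
    exact norm_integral_le_integral_norm _
  have hN : (eLpNorm f₀ 1 volume).toReal = ∫ y, ‖f₀ y‖ := by
    rw [eLpNorm_one_eq_lintegral_enorm, ← ofReal_integral_norm_eq_lintegral_enorm hf,
      ENNReal.toReal_ofReal (integral_nonneg fun _ => norm_nonneg _)]
  -- first bound
  have hb1 : |sol f₀ t v z| ≤ C * (eLpNorm f₀ 1 volume).toReal := by
    refine habs.trans ?_
    rw [hN, ← MeasureTheory.integral_const_mul]
    refine integral_mono_of_nonneg (Filter.Eventually.of_forall fun y => norm_nonneg _)
      (hf.norm.const_mul C) (Filter.Eventually.of_forall fun y => ?_)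
    show ‖K y * f₀ y‖ ≤ C * ‖f₀ y‖
    rw [norm_mul]
    exact mul_le_mul_of_nonneg_right (hKle y) (norm_nonneg _)
  -- second bound
  set M : ℝ := (eLpNorm f₀ ⊤ volume).toReal with hMdef
  have hfin : eLpNormEssSup f₀ volume ≠ ⊤ := by
    rw [← eLpNorm_exponent_top]; exact hfInf.2.ne
  have hMae : ∀ᵐ y ∂(volume : Measure (ℝ × ℝ)), ‖f₀ y‖ ≤ M := by
    filter_upwards [enorm_ae_le_eLpNormEssSup f₀ volume] with y hy
    have h2 := ENNReal.toReal_mono hfin hy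
    rw [hMdef, eLpNorm_exponent_top]
    simpa using h2
  have hKint : Integrable K volume := by
    have := (integrable_G ht).comp_sub_left ((v, z) : ℝ × ℝ)
    exact this
  have hKval : ∫ y, K y = 1 := by
    have h := integral_sub_left_eq_self (fun p : ℝ × ℝ => G t p.1 p.2) volume
      ((v, z) : ℝ × ℝ)
    exact h.trans (integral_G ht)
  have hb2 : |sol f₀ t v z| ≤ M := by
    refine habs.trans ?_
    have : ∫ y, ‖K y * f₀ y‖ ≤ ∫ y, K y * M := by
      refine integral_mono_of_nonneg (Filter.Eventually.of_forall fun y => norm_nonneg _)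
        (hKint.mul_const M) ?_
      filter_upwards [hMae] with y hy
      show ‖K y * f₀ y‖ ≤ K y * M
      rw [norm_mul, Real.norm_eq_abs (K y), abs_of_nonneg (hKnn y)]
      exact mul_le_mul_of_nonneg_left hy (hKnn y)
    refine this.trans ?_
    rw [MeasureTheory.integral_mul_const, hKval, one_mul]
  exact le_min hb1 hb2

/-- If `f₀ ∈ L¹ ∩ L^∞`, then for every `s > 0`,
`‖g̃(s)‖_∞ ≤ min{(√3/(2π))(1-e^{-s})^{-2} ‖f₀‖₁, e^{2s} ‖f₀‖_∞}`. -/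
theorem stmt_7 (f₀ : ℝ × ℝ → ℝ)
    (hf₁ : MemLp f₀ 1 volume) (hfInf : MemLp f₀ ⊤ volume) :
    ∀ s : ℝ, 0 < s →
      eLpNorm (fun x : ℝ × ℝ => tg f₀ s x.1 x.2) ⊤ volume
        ≤ ENNReal.ofReal (min
            (Real.sqrt 3 / (2 * Real.pi) * (1 - Real.exp (-s))⁻¹ ^ 2
              * (eLpNorm f₀ 1 volume).toReal)
            (Real.exp (2 * s) * (eLpNorm f₀ ⊤ volume).toReal)) := by
  intro s hs
  set t : ℝ := Real.exp s - 1 with htdef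
  have ht : 0 < t := by
    have : (1:ℝ) < Real.exp s := by
      calc (1:ℝ) = Real.exp 0 := Real.exp_zero.symm
        _ < Real.exp s := Real.exp_lt_exp.mpr hs
    simpa [htdef] using sub_pos.mpr this
  have hM0 : 0 ≤ (eLpNorm f₀ ⊤ volume).toReal := ENNReal.toReal_nonneg
  have hN0 : 0 ≤ (eLpNorm f₀ 1 volume).toReal := ENNReal.toReal_nonneg
  have hπ : (0:ℝ) < Real.pi := Real.pi_pos
  -- the scaling identity
  have hscale : Real.exp (2 * s) * (Real.sqrt 3 / (2 * Real.pi * t ^ 2))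
      = Real.sqrt 3 / (2 * Real.pi) * (1 - Real.exp (-s))⁻¹ ^ 2 := by
    have he : Real.exp (-s) = (Real.exp s)⁻¹ := Real.exp_neg s
    have hes : (0:ℝ) < Real.exp s := Real.exp_pos s
    have h1 : (1:ℝ) - Real.exp (-s) = t / Real.exp s := by
      rw [he, htdef]; field_simp
    have h2 : Real.exp (2 * s) = Real.exp s * Real.exp s := by
      rw [two_mul, Real.exp_add]
    rw [h1, h2, inv_div]
    field_simp
  rw [eLpNorm_exponent_top]
  refine eLpNormEssSup_le_of_ae_bound (C := min
      (Real.sqrt 3 / (2 * Real.pi) * (1 - Real.exp (-s))⁻¹ ^ 2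
        * (eLpNorm f₀ 1 volume).toReal)
      (Real.exp (2 * s) * (eLpNorm f₀ ⊤ volume).toReal)) ?_
  refine Filter.Eventually.of_forall fun x => ?_
  have hsol := sol_le_min f₀ hf₁ hfInf ht (Real.exp (s / 2) * x.1)
    (Real.exp (3 * s / 2) * x.2)
  have hexp : (0:ℝ) ≤ Real.exp (2 * s) := (Real.exp_pos _).le
  rw [Real.norm_eq_abs]
  have htg : |tg f₀ s x.1 x.2| = Real.exp (2 * s) *
      |sol f₀ t (Real.exp (s / 2) * x.1) (Real.exp (3 * s / 2) * x.2)| := by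
    rw [tg, abs_mul, abs_of_pos (Real.exp_pos _)]
  rw [htg]
  refine le_min ?_ ?_
  · calc Real.exp (2 * s) * |sol f₀ t (Real.exp (s / 2) * x.1) (Real.exp (3 * s / 2) * x.2)|
        ≤ Real.exp (2 * s) * (Real.sqrt 3 / (2 * Real.pi * t ^ 2)
            * (eLpNorm f₀ 1 volume).toReal) :=
          mul_le_mul_of_nonneg_left (hsol.trans (min_le_left _ _)) hexp
      _ = Real.sqrt 3 / (2 * Real.pi) * (1 - Real.exp (-s))⁻¹ ^ 2
            * (eLpNorm f₀ 1 volume).toReal := by rw [← mul_assoc, hscale]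
  · exact mul_le_mul_of_nonneg_left (hsol.trans (min_le_right _ _)) hexp
end

section
/- Let Ω = (0,1)² and t ≥ 0. Then for every g ∈ H₀¹(Ω), ‖g‖_{L²(Ω)} ≤ (1/(√2 C(t))) ‖∂_v g + t ∂_z g‖_{L²(Ω)}, where C(t) = 1 if 0 ≤ t ≤ 1 and C(t) = t if t > 1. -/
open Real MeasureTheory

/-- Cauchy–Schwarz for integrals over a finite measure. -/
lemma aux_cs {μ : Measure ℝ} [IsFiniteMeasure μ] {f : ℝ → ℝ}
    (hf : Integrable f μ) (hf2 : Integrable (fun x => f x ^ 2) μ) :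
    (∫ x, f x ∂μ) ^ 2 ≤ (μ Set.univ).toReal * ∫ x, f x ^ 2 ∂μ := by
  have h0 : (0:ℝ) ≤ ∫ p : ℝ × ℝ, (f p.1 - f p.2) ^ 2 ∂(μ.prod μ) :=
    integral_nonneg fun p => sq_nonneg _
  have hA : Integrable (fun p : ℝ × ℝ => f p.1 ^ 2) (μ.prod μ) := by
    simpa using hf2.mul_prod (integrable_const (1:ℝ))
  have hB : Integrable (fun p : ℝ × ℝ => f p.2 ^ 2) (μ.prod μ) := by
    simpa using (integrable_const (1:ℝ)).mul_prod hf2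
  have hC : Integrable (fun p : ℝ × ℝ => f p.1 * f p.2) (μ.prod μ) := hf.mul_prod hf
  have key : ∫ p : ℝ × ℝ, (f p.1 - f p.2) ^ 2 ∂(μ.prod μ)
      = (μ Set.univ).toReal * (∫ x, f x ^ 2 ∂μ) * 2 - 2 * (∫ x, f x ∂μ) ^ 2 := by
    have hfe : (fun p : ℝ × ℝ => (f p.1 - f p.2) ^ 2)
        = fun p : ℝ × ℝ => (f p.1 ^ 2 + f p.2 ^ 2) - 2 * (f p.1 * f p.2) := by
      funext p; ring
    have hAB : Integrable (fun p : ℝ × ℝ => f p.1 ^ 2 + f p.2 ^ 2) (μ.prod μ) := hA.add hB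
    have hC2 : Integrable (fun p : ℝ × ℝ => 2 * (f p.1 * f p.2)) (μ.prod μ) := hC.const_mul 2
    rw [hfe, integral_sub hAB hC2, integral_add hA hB, integral_const_mul,
      integral_fun_fst (f := fun x => f x ^ 2), integral_fun_snd (f := fun x => f x ^ 2),
      integral_prod_mul]
    simp only [smul_eq_mul, measureReal_def]
    ring
  nlinarith [h0, key]

lemma aux_sq {α : Type*} [TopologicalSpace α] {F : α → ℝ} (h : HasCompactSupport F) :
    HasCompactSupport (fun x => F x ^ 2) :=
  h.comp_left (g := fun y : ℝ => y ^ 2) (by simp)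

/-- 1-D Poincaré inequality on `(0,1)` with constant `1/2` (for the square). -/
lemma aux_1d {f : ℝ → ℝ} (hf : ContDiff ℝ 1 f)
    (h0 : ∀ x : ℝ, x ∉ Set.Ioo (0:ℝ) 1 → f x = 0) :
    ∫ x : ℝ, f x ^ 2 ≤ (1/2) * ∫ x : ℝ, deriv f x ^ 2 := by
  have hK : HasCompactSupport f := HasCompactSupport.intro (isCompact_Icc (a := (0:ℝ)) (b := 1))
    (fun x hx => h0 x (fun h => hx (Set.Ioo_subset_Icc_self h)))
  have hdc : Continuous (deriv f) := hf.continuous_deriv le_rfl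
  have hKd : HasCompactSupport (deriv f) := hK.deriv
  have hJint : Integrable (fun x : ℝ => deriv f x ^ 2) :=
    ((hdc.pow 2).integrable_of_hasCompactSupport (aux_sq hKd))
  have hf2int : Integrable (fun x : ℝ => f x ^ 2) :=
    ((hf.continuous.pow 2).integrable_of_hasCompactSupport (aux_sq hK))
  set J := ∫ x : ℝ, deriv f x ^ 2 with hJdef
  have hbound : ∀ x ∈ Set.Ioo (0:ℝ) 1, f x ^ 2 ≤ x * J := by
    intro x hx
    have hfx : f x = ∫ u in Set.Ioc (0:ℝ) x, deriv f u := by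
      have h1 := intervalIntegral.integral_deriv_eq_sub (a := (0:ℝ)) (b := x)
        (fun u _ => (hf.differentiable one_ne_zero).differentiableAt)
        (hdc.intervalIntegrable 0 x)
      rw [h0 0 (by simp), sub_zero] at h1
      rw [← h1, intervalIntegral.integral_of_le hx.1.le]
    haveI : IsFiniteMeasure (volume.restrict (Set.Ioc (0:ℝ) x)) :=
      ⟨by rw [Measure.restrict_apply_univ, Real.volume_Ioc]; exact ENNReal.ofReal_lt_top⟩
    have hcs := aux_cs (μ := volume.restrict (Set.Ioc (0:ℝ) x)) (f := deriv f)
      (hdc.integrable_of_hasCompactSupport hKd).restrict (hJint.restrict)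
    rw [Measure.restrict_apply_univ, Real.volume_Ioc, sub_zero,
      ENNReal.toReal_ofReal hx.1.le] at hcs
    have hsub : ∫ u in Set.Ioc (0:ℝ) x, deriv f u ^ 2 ≤ J :=
      setIntegral_le_integral hJint (Filter.Eventually.of_forall fun u => sq_nonneg _)
    calc f x ^ 2 = (∫ u in Set.Ioc (0:ℝ) x, deriv f u) ^ 2 := by rw [hfx]
      _ ≤ x * ∫ u in Set.Ioc (0:ℝ) x, deriv f u ^ 2 := hcs
      _ ≤ x * J := mul_le_mul_of_nonneg_left hsub hx.1.le
  have h1 : ∫ x : ℝ, f x ^ 2 = ∫ x in Set.Ioo (0:ℝ) 1, f x ^ 2 :=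
    (setIntegral_eq_integral_of_forall_compl_eq_zero
      (fun x hx => by rw [h0 x hx]; ring)).symm
  have h2 : ∫ x in Set.Ioo (0:ℝ) 1, f x ^ 2 ≤ ∫ x in Set.Ioo (0:ℝ) 1, x * J := by
    apply setIntegral_mono_on hf2int.restrict
      (((continuous_id.mul continuous_const).integrableOn_Icc (a := (0:ℝ)) (b := 1)).mono_set
        Set.Ioo_subset_Icc_self)
      measurableSet_Ioo hbound
  have h3 : ∫ x in Set.Ioo (0:ℝ) 1, x * J = (1/2) * J := by
    rw [← integral_Ioc_eq_integral_Ioo, ← intervalIntegral.integral_of_le (zero_le_one),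
      intervalIntegral.integral_mul_const, integral_id]
    ring
  rw [h1]
  calc ∫ x in Set.Ioo (0:ℝ) 1, f x ^ 2 ≤ ∫ x in Set.Ioo (0:ℝ) 1, x * J := h2
    _ = (1/2) * J := h3

/-- 2-D: slicing in the first variable. -/
lemma aux_2d {h : ℝ × ℝ → ℝ} (hh : ContDiff ℝ 1 h) (hK : HasCompactSupport h)
    (h0 : ∀ p : ℝ × ℝ, p.1 ∉ Set.Ioo (0:ℝ) 1 → h p = 0) :
    ∫ p : ℝ × ℝ, h p ^ 2 ≤ (1/2) * ∫ p : ℝ × ℝ, (fderiv ℝ h p (1, 0)) ^ 2 := by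
  have hDc : Continuous (fun p : ℝ × ℝ => fderiv ℝ h p (1, 0)) :=
    (ContinuousLinearMap.apply ℝ ℝ ((1:ℝ), (0:ℝ))).continuous.comp (hh.continuous_fderiv one_ne_zero)
  have hDK : HasCompactSupport (fun p : ℝ × ℝ => fderiv ℝ h p (1, 0)) := hK.fderiv_apply ℝ _
  have hI2 : Integrable (fun p : ℝ × ℝ => h p ^ 2) :=
    (hh.continuous.pow 2).integrable_of_hasCompactSupport (aux_sq hK)
  have hID : Integrable (fun p : ℝ × ℝ => (fderiv ℝ h p (1, 0)) ^ 2) :=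
    (hDc.pow 2).integrable_of_hasCompactSupport (aux_sq hDK)
  have hderiv : ∀ z v : ℝ, deriv (fun v => h (v, z)) v = fderiv ℝ h (v, z) (1, 0) := by
    intro z v
    have h1 : HasFDerivAt h (fderiv ℝ h (v, z)) (v, z) :=
      ((hh.differentiable one_ne_zero) (v, z)).hasFDerivAt
    have h2 : HasDerivAt (fun v : ℝ => (v, z)) ((1:ℝ), (0:ℝ)) v :=
      (hasDerivAt_id v).prodMk (hasDerivAt_const v z)
    exact (h1.comp_hasDerivAt v h2).deriv
  have hslice : ∀ z : ℝ, ∫ v : ℝ, h (v, z) ^ 2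
      ≤ (1/2) * ∫ v : ℝ, (fderiv ℝ h (v, z) (1, 0)) ^ 2 := by
    intro z
    have hfz : ContDiff ℝ 1 (fun v : ℝ => h (v, z)) :=
      hh.comp (contDiff_id.prodMk contDiff_const)
    have := aux_1d hfz (fun v hv => h0 (v, z) hv)
    simpa only [hderiv] using this
  have hI2' : Integrable (fun p : ℝ × ℝ => h p ^ 2) ((volume : Measure ℝ).prod volume) := by
    rwa [← Measure.volume_eq_prod]
  have hID' : Integrable (fun p : ℝ × ℝ => (fderiv ℝ h p (1, 0)) ^ 2)
      ((volume : Measure ℝ).prod volume) := by rwa [← Measure.volume_eq_prod]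
  have e1 : ∫ p : ℝ × ℝ, h p ^ 2 = ∫ z : ℝ, ∫ v : ℝ, h (v, z) ^ 2 ∂volume ∂volume := by
    rw [Measure.volume_eq_prod, integral_prod _ hI2']
    exact integral_integral_swap hI2'
  have e2 : ∫ p : ℝ × ℝ, (fderiv ℝ h p (1, 0)) ^ 2
      = ∫ z : ℝ, ∫ v : ℝ, (fderiv ℝ h (v, z) (1, 0)) ^ 2 ∂volume ∂volume := by
    rw [Measure.volume_eq_prod, integral_prod _ hID']
    exact integral_integral_swap hID'
  rw [e1, e2, ← integral_const_mul]
  apply integral_mono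
  · exact hI2'.swap.integral_prod_left
  · exact (hID'.swap.integral_prod_left).const_mul _
  · exact hslice

/-- The shear `(v, z) ↦ (v, z + a v)` as a homeomorphism of `ℝ²`. -/
def aux_shear (a : ℝ) : ℝ × ℝ ≃ₜ ℝ × ℝ where
  toFun p := (p.1, p.2 + a * p.1)
  invFun p := (p.1, p.2 - a * p.1)
  left_inv p := by simp
  right_inv p := by simp
  continuous_toFun := by fun_prop
  continuous_invFun := by fun_prop

/-- Change of variables under a shear. -/
lemma aux_cov {F : ℝ × ℝ → ℝ} (hFc : Continuous F) (hFK : HasCompactSupport F) (a : ℝ) :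
    ∫ p : ℝ × ℝ, F (p.1, p.2 + a * p.1) = ∫ p : ℝ × ℝ, F p := by
  have hG : Continuous (fun p : ℝ × ℝ => F (p.1, p.2 + a * p.1)) :=
    hFc.comp (aux_shear a).continuous
  have hGK : HasCompactSupport (fun p : ℝ × ℝ => F (p.1, p.2 + a * p.1)) :=
    hFK.comp_homeomorph (aux_shear a)
  have hGi : Integrable (fun p : ℝ × ℝ => F (p.1, p.2 + a * p.1))
      ((volume : Measure ℝ).prod volume) := by
    rw [← Measure.volume_eq_prod]; exact hG.integrable_of_hasCompactSupport hGK
  have hFi : Integrable F ((volume : Measure ℝ).prod volume) := by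
    rw [← Measure.volume_eq_prod]; exact hFc.integrable_of_hasCompactSupport hFK
  rw [Measure.volume_eq_prod, integral_prod _ hGi, integral_prod _ hFi]
  congr 1
  funext v
  exact integral_add_right_eq_self (fun z => F (v, z)) (a * v)

/-- Change of variables under the coordinate swap. -/
lemma aux_swap (F : ℝ × ℝ → ℝ) :
    ∫ p : ℝ × ℝ, F (p.2, p.1) = ∫ p : ℝ × ℝ, F p := by
  rw [Measure.volume_eq_prod]
  exact integral_prod_swap F

/-- Main inequality over all of `ℝ²`. -/
lemma aux_main (t : ℝ) (ht : 0 ≤ t) (g : ℝ × ℝ → ℝ)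
    (hg : ContDiff ℝ 1 g)
    (hg0 : ∀ p : ℝ × ℝ, p ∉ Set.Ioo (0 : ℝ) 1 ×ˢ Set.Ioo (0 : ℝ) 1 → g p = 0) :
    ∫ p : ℝ × ℝ, (g p) ^ 2
      ≤ (1 / (2 * (if t ≤ 1 then 1 else t) ^ 2))
        * ∫ p : ℝ × ℝ, (fderiv ℝ g p (1, 0) + t * fderiv ℝ g p (0, 1)) ^ 2 := by
  set D : ℝ × ℝ → ℝ := fun p => fderiv ℝ g p (1, 0) + t * fderiv ℝ g p (0, 1) with hD
  have hgc : Continuous g := hg.continuous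
  have hgK : HasCompactSupport g := HasCompactSupport.intro
    ((isCompact_Icc (a := (0:ℝ)) (b := 1)).prod (isCompact_Icc (a := (0:ℝ)) (b := 1)))
    (fun p hp => hg0 p (fun hm => hp ⟨Set.Ioo_subset_Icc_self hm.1, Set.Ioo_subset_Icc_self hm.2⟩))
  have hDc : Continuous D := by
    apply Continuous.add
    · exact (ContinuousLinearMap.apply ℝ ℝ ((1:ℝ), (0:ℝ))).continuous.comp
        (hg.continuous_fderiv one_ne_zero)
    · exact continuous_const.mul ((ContinuousLinearMap.apply ℝ ℝ ((0:ℝ), (1:ℝ))).continuous.comp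
        (hg.continuous_fderiv one_ne_zero))
  have hDK : HasCompactSupport D := by
    apply HasCompactSupport.add
    · exact hgK.fderiv_apply ℝ _
    · exact (hgK.fderiv_apply ℝ ((0:ℝ),(1:ℝ))).comp_left (g := fun y : ℝ => t * y) (by simp)
  rcases le_or_gt t 1 with h1 | h1
  · -- case t ≤ 1
    rw [if_pos h1]
    set L : (ℝ × ℝ) →L[ℝ] (ℝ × ℝ) :=
      (ContinuousLinearMap.fst ℝ ℝ ℝ).prod
        ((ContinuousLinearMap.snd ℝ ℝ ℝ) + t • (ContinuousLinearMap.fst ℝ ℝ ℝ)) with hLdef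
    have hL : ∀ p : ℝ × ℝ, L p = (p.1, p.2 + t * p.1) := by
      intro p
      simp [hLdef, ContinuousLinearMap.prod_apply, smul_eq_mul]
    have hLs : ⇑L = ⇑(aux_shear t) := funext fun p => hL p
    have hhc : ContDiff ℝ 1 (g ∘ ⇑L) := hg.comp L.contDiff
    have hKh : HasCompactSupport (g ∘ ⇑L) := by
      rw [show g ∘ ⇑L = g ∘ ⇑(aux_shear t) from by rw [hLs]]
      exact hgK.comp_homeomorph _
    have hfd : ∀ p : ℝ × ℝ, fderiv ℝ (g ∘ ⇑L) p (1, 0) = D (L p) := by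
      intro p
      rw [fderiv_comp p ((hg.differentiable one_ne_zero) (L p)) L.differentiableAt,
        L.fderiv, ContinuousLinearMap.coe_comp', Function.comp_apply]
      have e : L ((1:ℝ), (0:ℝ)) = ((1:ℝ),(0:ℝ)) + t • ((0:ℝ),(1:ℝ)) := by
        rw [hL]; simp [Prod.ext_iff]
      rw [e, map_add]
      simp only [ContinuousLinearMap.map_smul, hD, smul_eq_mul]
    have hvan : ∀ p : ℝ × ℝ, p.1 ∉ Set.Ioo (0:ℝ) 1 → (g ∘ ⇑L) p = 0 := by
      intro p hp
      exact hg0 (L p) (fun hm => hp (by rw [hL p] at hm; exact hm.1))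
    have key := aux_2d hhc hKh hvan
    have eL : ∫ p : ℝ × ℝ, (g ∘ ⇑L) p ^ 2 = ∫ p : ℝ × ℝ, g p ^ 2 := by
      calc ∫ p : ℝ × ℝ, (g ∘ ⇑L) p ^ 2
          = ∫ p : ℝ × ℝ, (fun q : ℝ × ℝ => g q ^ 2) (p.1, p.2 + t * p.1) := by
            simp only [Function.comp_apply, hL]
        _ = ∫ p : ℝ × ℝ, g p ^ 2 := aux_cov (hgc.pow 2) (aux_sq hgK) t
    have eR : ∫ p : ℝ × ℝ, (fderiv ℝ (g ∘ ⇑L) p (1, 0)) ^ 2 = ∫ p : ℝ × ℝ, D p ^ 2 := by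
      calc ∫ p : ℝ × ℝ, (fderiv ℝ (g ∘ ⇑L) p (1, 0)) ^ 2
          = ∫ p : ℝ × ℝ, (fun q : ℝ × ℝ => D q ^ 2) (p.1, p.2 + t * p.1) := by
            simp only [hfd, hL]
        _ = ∫ p : ℝ × ℝ, D p ^ 2 := aux_cov (hDc.pow 2) (aux_sq hDK) t
    rw [eL, eR] at key
    calc ∫ p : ℝ × ℝ, g p ^ 2 ≤ (1/2) * ∫ p : ℝ × ℝ, D p ^ 2 := key
      _ = (1 / (2 * 1 ^ 2)) * ∫ p : ℝ × ℝ, D p ^ 2 := by norm_num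
  · -- case t > 1
    rw [if_neg (not_le.mpr h1)]
    have ht0 : (0:ℝ) < t := lt_trans one_pos h1
    set L : (ℝ × ℝ) →L[ℝ] (ℝ × ℝ) :=
      ((ContinuousLinearMap.snd ℝ ℝ ℝ) + t⁻¹ • (ContinuousLinearMap.fst ℝ ℝ ℝ)).prod
        (ContinuousLinearMap.fst ℝ ℝ ℝ) with hLdef
    have hL : ∀ p : ℝ × ℝ, L p = (p.2 + t⁻¹ * p.1, p.1) := by
      intro p
      simp [hLdef, ContinuousLinearMap.prod_apply, smul_eq_mul]
    have hLs : ⇑L = ⇑((aux_shear t⁻¹).trans (Homeomorph.prodComm ℝ ℝ)) := funext fun p => hL p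
    have hhc : ContDiff ℝ 1 (g ∘ ⇑L) := hg.comp L.contDiff
    have hKh : HasCompactSupport (g ∘ ⇑L) := by
      rw [show g ∘ ⇑L = g ∘ ⇑((aux_shear t⁻¹).trans (Homeomorph.prodComm ℝ ℝ)) from by rw [hLs]]
      exact hgK.comp_homeomorph _
    have hfd : ∀ p : ℝ × ℝ, fderiv ℝ (g ∘ ⇑L) p (1, 0) = t⁻¹ * D (L p) := by
      intro p
      rw [fderiv_comp p ((hg.differentiable one_ne_zero) (L p)) L.differentiableAt,
        L.fderiv, ContinuousLinearMap.coe_comp', Function.comp_apply]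
      have e : L ((1:ℝ), (0:ℝ)) = t⁻¹ • (((1:ℝ),(0:ℝ)) + t • ((0:ℝ),(1:ℝ))) := by
        rw [hL]
        simp [Prod.ext_iff, Prod.smul_mk, smul_eq_mul]
        field_simp
      rw [e]
      simp only [ContinuousLinearMap.map_smul, map_add, hD, smul_eq_mul]
    have hvan : ∀ p : ℝ × ℝ, p.1 ∉ Set.Ioo (0:ℝ) 1 → (g ∘ ⇑L) p = 0 := by
      intro p hp
      exact hg0 (L p) (fun hm => hp (by rw [hL p] at hm; exact hm.2))
    have key := aux_2d hhc hKh hvan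
    have eL : ∫ p : ℝ × ℝ, (g ∘ ⇑L) p ^ 2 = ∫ p : ℝ × ℝ, g p ^ 2 := by
      calc ∫ p : ℝ × ℝ, (g ∘ ⇑L) p ^ 2
          = ∫ p : ℝ × ℝ, (fun q : ℝ × ℝ => g (q.2, q.1) ^ 2) (p.1, p.2 + t⁻¹ * p.1) := by
            simp only [Function.comp_apply, hL]
        _ = ∫ p : ℝ × ℝ, g (p.2, p.1) ^ 2 :=
            aux_cov (F := fun q : ℝ × ℝ => g (q.2, q.1) ^ 2)
              ((hgc.comp (continuous_snd.prodMk continuous_fst)).pow 2)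
              (aux_sq (hgK.comp_homeomorph (Homeomorph.prodComm ℝ ℝ))) t⁻¹
        _ = ∫ p : ℝ × ℝ, g p ^ 2 := aux_swap (fun q => g q ^ 2)
    have eR : ∫ p : ℝ × ℝ, (fderiv ℝ (g ∘ ⇑L) p (1, 0)) ^ 2
        = t⁻¹ ^ 2 * ∫ p : ℝ × ℝ, D p ^ 2 := by
      calc ∫ p : ℝ × ℝ, (fderiv ℝ (g ∘ ⇑L) p (1, 0)) ^ 2
          = ∫ p : ℝ × ℝ, t⁻¹ ^ 2 * ((fun q : ℝ × ℝ => D (q.2, q.1) ^ 2) (p.1, p.2 + t⁻¹ * p.1)) := by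
            simp only [hfd, hL, mul_pow]
        _ = t⁻¹ ^ 2 * ∫ p : ℝ × ℝ, (fun q : ℝ × ℝ => D (q.2, q.1) ^ 2) (p.1, p.2 + t⁻¹ * p.1) :=
            integral_const_mul _ _
        _ = t⁻¹ ^ 2 * ∫ p : ℝ × ℝ, D (p.2, p.1) ^ 2 := by
            congr 1
            exact aux_cov (F := fun q : ℝ × ℝ => D (q.2, q.1) ^ 2)
              ((hDc.comp (continuous_snd.prodMk continuous_fst)).pow 2)
              (aux_sq (hDK.comp_homeomorph (Homeomorph.prodComm ℝ ℝ))) t⁻¹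
        _ = t⁻¹ ^ 2 * ∫ p : ℝ × ℝ, D p ^ 2 := by rw [aux_swap (fun q => D q ^ 2)]
    rw [eL, eR] at key
    calc ∫ p : ℝ × ℝ, g p ^ 2 ≤ (1/2) * (t⁻¹ ^ 2 * ∫ p : ℝ × ℝ, D p ^ 2) := key
      _ = (1 / (2 * t ^ 2)) * ∫ p : ℝ × ℝ, D p ^ 2 := by
          field_simp

/-- Anisotropic Poincaré inequality on the unit square `Ω = (0,1)²`:
for `g ∈ H₀¹(Ω)` (here: `C¹` vanishing outside `Ω`) and `t ≥ 0`,
`‖g‖_{L²(Ω)} ≤ (1/(√2 C(t))) ‖∂_v g + t ∂_z g‖_{L²(Ω)}`, where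
`C(t) = 1` for `0 ≤ t ≤ 1` and `C(t) = t` for `t > 1`. -/
theorem stmt_12 (t : ℝ) (ht : 0 ≤ t) (g : ℝ × ℝ → ℝ)
    (hg : ContDiff ℝ 1 g)
    (hg0 : ∀ p : ℝ × ℝ, p ∉ Set.Ioo (0 : ℝ) 1 ×ˢ Set.Ioo (0 : ℝ) 1 → g p = 0) :
    Real.sqrt (∫ p in Set.Ioo (0 : ℝ) 1 ×ˢ Set.Ioo (0 : ℝ) 1, (g p) ^ 2)
      ≤ (1 / (Real.sqrt 2 * (if t ≤ 1 then 1 else t)))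
        * Real.sqrt (∫ p in Set.Ioo (0 : ℝ) 1 ×ˢ Set.Ioo (0 : ℝ) 1,
            (fderiv ℝ g p (1, 0) + t * fderiv ℝ g p (0, 1)) ^ 2) := by
  have eA : ∫ p in Set.Ioo (0 : ℝ) 1 ×ˢ Set.Ioo (0 : ℝ) 1, (g p) ^ 2
      = ∫ p : ℝ × ℝ, (g p) ^ 2 :=
    setIntegral_eq_integral_of_forall_compl_eq_zero
      (fun p hp => by rw [hg0 p hp]; norm_num)
  -- the boundary of the square is null
  have hnull : volume ((Set.Icc (0:ℝ) 1 ×ˢ Set.Icc (0:ℝ) 1)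
      \ (Set.Ioo (0:ℝ) 1 ×ˢ Set.Ioo (0:ℝ) 1)) = 0 := by
    apply measure_mono_null (t := (({(0:ℝ)} ×ˢ (Set.univ : Set ℝ)) ∪ ({(1:ℝ)} ×ˢ Set.univ))
      ∪ (((Set.univ : Set ℝ) ×ˢ {(0:ℝ)}) ∪ (Set.univ ×ˢ {(1:ℝ)})))
    · rintro ⟨x, y⟩ ⟨⟨⟨hx0, hx1⟩, hy0, hy1⟩, hn⟩
      by_cases e1 : x = 0
      · exact Or.inl (Or.inl ⟨e1, trivial⟩)
      by_cases e2 : x = 1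
      · exact Or.inl (Or.inr ⟨e2, trivial⟩)
      by_cases e3 : y = 0
      · exact Or.inr (Or.inl ⟨trivial, e3⟩)
      by_cases e4 : y = 1
      · exact Or.inr (Or.inr ⟨trivial, e4⟩)
      exfalso
      exact hn ⟨⟨lt_of_le_of_ne hx0 (Ne.symm e1), lt_of_le_of_ne hx1 e2⟩,
        ⟨lt_of_le_of_ne hy0 (Ne.symm e3), lt_of_le_of_ne hy1 e4⟩⟩
    · apply measure_union_null <;> apply measure_union_null <;>
        · rw [Measure.volume_eq_prod, Measure.prod_prod]; simp
  have hae : ∀ᵐ p : ℝ × ℝ, p ∉ Set.Ioo (0 : ℝ) 1 ×ˢ Set.Ioo (0 : ℝ) 1 →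
      (fderiv ℝ g p (1, 0) + t * fderiv ℝ g p (0, 1)) ^ 2 = 0 := by
    filter_upwards [measure_eq_zero_iff_ae_notMem.mp hnull] with p hpN hpO
    have hpIcc : p ∉ Set.Icc (0:ℝ) 1 ×ˢ Set.Icc (0:ℝ) 1 := fun hIcc => hpN ⟨hIcc, hpO⟩
    have hop : IsOpen ((Set.Icc (0:ℝ) 1 ×ˢ Set.Icc (0:ℝ) 1) : Set (ℝ × ℝ))ᶜ :=
      (isClosed_Icc.prod isClosed_Icc).isOpen_compl
    have hev : g =ᶠ[nhds p] fun _ => (0:ℝ) :=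
      Filter.eventuallyEq_of_mem (hop.mem_nhds hpIcc)
        (fun q hq => hg0 q
          (fun hm => hq ⟨Set.Ioo_subset_Icc_self hm.1, Set.Ioo_subset_Icc_self hm.2⟩))
    have hfz : fderiv ℝ g p = 0 := by
      rw [hev.fderiv_eq]; exact fderiv_const_apply 0
    rw [hfz]
    norm_num
  have eB : ∫ p in Set.Ioo (0 : ℝ) 1 ×ˢ Set.Ioo (0 : ℝ) 1,
        (fderiv ℝ g p (1, 0) + t * fderiv ℝ g p (0, 1)) ^ 2
      = ∫ p : ℝ × ℝ, (fderiv ℝ g p (1, 0) + t * fderiv ℝ g p (0, 1)) ^ 2 :=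
    setIntegral_eq_integral_of_ae_compl_eq_zero hae
  rw [eA, eB]
  have main := aux_main t ht g hg hg0
  set c : ℝ := if t ≤ 1 then 1 else t with hcdef
  have hc : 0 < c := by
    rw [hcdef]; split
    · exact one_pos
    · linarith [not_le.mp (by assumption)]
  set B := ∫ p : ℝ × ℝ, (fderiv ℝ g p (1, 0) + t * fderiv ℝ g p (0, 1)) ^ 2 with hBdef
  have hBnn : 0 ≤ B := integral_nonneg fun p => sq_nonneg _
  calc Real.sqrt (∫ p : ℝ × ℝ, (g p) ^ 2)
      ≤ Real.sqrt ((1 / (2 * c ^ 2)) * B) := Real.sqrt_le_sqrt main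
    _ = 1 / (Real.sqrt 2 * c) * Real.sqrt B := by
        rw [Real.sqrt_mul (by positivity) B]
        congr 1
        rw [show (1:ℝ) / (2 * c ^ 2) = (1 / (Real.sqrt 2 * c)) ^ 2 by
          rw [div_pow, one_pow, mul_pow, Real.sq_sqrt (by norm_num : (0:ℝ) ≤ 2)]]
        exact Real.sqrt_sq (by positivity)
end
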